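/- If the solution set X* of A x − B|x| = b is nonempty and x = 0 is the only solution of A x − B|x| = 0, then there is κ > 0 such that κ·dist(x, X*) ≤ ‖A x − B|x| − b‖₂ for all x ∈ R^n. -/

import Mathlib

open Matrix

/-- The `i`-th largest singular value of a real matrix (0-indexed),
defined as the `i`-th entry of the decreasingly sorted list of square roots
of the eigenvalues of `Aᴴ * A`; `0` if `i` is out of range. -/
noncomputable def sv {m n : ℕ} (A : Matrix (Fin m) (Fin n) ℝ) (i : ℕ) : ℝ :=
  ((List.ofFn fun j : Fin n =>
      Real.sqrt (((by simpa using Matrix.isHermitian_conjTranspose_mul_self A : (Aᵀ * A).IsHermitian)).eigenvalues j)).insertionSort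
    (· ≥ ·)).getD i 0

/-- Euclidean norm of a vector. -/
noncomputable def vnorm {n : ℕ} (x : Fin n → ℝ) : ℝ := Real.sqrt (∑ i, x i ^ 2)

open Matrix Metric Filter

noncomputable section Gave

variable {m n : ℕ}

/-- piecewise-homogeneous-linear map: absolute values only on coordinates in `S`. -/
def phl (M B : Matrix (Fin m) (Fin n) ℝ) (S : Finset (Fin n)) (x : Fin n → ℝ) : Fin m → ℝ :=
  M.mulVec x - B.mulVec fun j => if j ∈ S then |x j| else x j

abbrev Ee (n : ℕ) := EuclideanSpace ℝ (Fin n)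

/-- identity coercion into Euclidean space -/
def toE {k : ℕ} (v : Fin k → ℝ) : Ee k := WithLp.toLp 2 v

lemma phl_zero (M B : Matrix (Fin m) (Fin n) ℝ) (S : Finset (Fin n)) : phl M B S 0 = 0 := by
  have : (fun j => if j ∈ S then |(0 : Fin n → ℝ) j| else (0 : Fin n → ℝ) j) = (0 : Fin n → ℝ) := by
    funext j; simp
  rw [phl, this, Matrix.mulVec_zero]
  have : (B *ᵥ (0 : Fin n → ℝ)) = 0 := Matrix.mulVec_zero B
  rw [this]; simp

lemma phl_smul (M B : Matrix (Fin m) (Fin n) ℝ) (S : Finset (Fin n)) (t : ℝ) (ht : 0 ≤ t)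
    (x : Fin n → ℝ) : phl M B S (t • x) = t • phl M B S x := by
  have h : (fun j => if j ∈ S then |(t • x) j| else (t • x) j)
      = t • fun j => if j ∈ S then |x j| else x j := by
    funext j
    by_cases hj : j ∈ S <;> simp [hj, abs_mul, abs_of_nonneg ht, mul_comm]
  unfold phl
  rw [h, Matrix.mulVec_smul, Matrix.mulVec_smul, smul_sub]

lemma phl_continuous (M B : Matrix (Fin m) (Fin n) ℝ) (S : Finset (Fin n)) :
    Continuous (phl M B S) := by
  have hmv : ∀ (C : Matrix (Fin m) (Fin n) ℝ), Continuous (fun x : Fin n → ℝ => C.mulVec x) := by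
    intro C
    have hC : (fun x : Fin n → ℝ => C.mulVec x) = fun x i => ∑ j, C i j * x j := by
      funext x i; simp [Matrix.mulVec, dotProduct]
    rw [hC]
    exact continuous_pi fun i => continuous_finset_sum _ fun j _ =>
      (continuous_const.mul (continuous_apply j))
  have habs : Continuous (fun (x : Fin n → ℝ) (j : Fin n) => if j ∈ S then |x j| else x j) := by
    apply continuous_pi
    intro j
    by_cases hj : j ∈ S
    · simp only [hj, if_true]; exact continuous_abs.comp (continuous_apply j)
    · simpa [hj] using (continuous_apply j)
  exact (hmv M).sub ((hmv B).comp habs)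

/-- `phl` as a map between Euclidean spaces, continuous. -/
lemma phl_continuousE (M B : Matrix (Fin m) (Fin n) ℝ) (S : Finset (Fin n)) :
    Continuous (fun x : Ee n => toE (phl M B S x)) :=
  (PiLp.continuous_toLp 2 _).comp ((phl_continuous M B S).comp (PiLp.continuous_ofLp 2 _))

lemma abs_apply_le_norm (x : Ee n) (j : Fin n) : |x j| ≤ ‖x‖ := by
  rw [EuclideanSpace.norm_eq]
  have h1 : |x j| = Real.sqrt (‖x j‖ ^ 2) := by
    rw [Real.sqrt_sq_eq_abs]; simp [Real.norm_eq_abs]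
  rw [h1]
  apply Real.sqrt_le_sqrt
  exact Finset.single_le_sum (f := fun i => ‖x i‖ ^ 2) (fun i _ => sq_nonneg _) (Finset.mem_univ j)

/-- infDist scales for positive cones. -/
lemma infDist_smul_cone {Z : Set (Ee n)} (hZ : ∀ t : ℝ, 0 < t → ∀ z ∈ Z, t • z ∈ Z)
    (h0 : (0 : Ee n) ∈ Z) {c : ℝ} (hc : 0 < c) (x : Ee n) :
    infDist (c • x) Z = c * infDist x Z := by
  have hne : Z.Nonempty := ⟨0, h0⟩
  have key : ∀ (d : ℝ), 0 < d → ∀ y : Ee n, infDist (d • y) Z ≤ d * infDist y Z := by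
    intro d hd y
    refine le_of_forall_pos_le_add ?_
    intro ε hε
    have h1 : infDist y Z < infDist y Z + ε / d := by
      have := div_pos hε hd; linarith
    obtain ⟨z, hzZ, hzd⟩ := (Metric.infDist_lt_iff hne).mp h1
    have h2 : infDist (d • y) Z ≤ dist (d • y) (d • z) :=
      Metric.infDist_le_dist_of_mem (hZ d hd z hzZ)
    rw [dist_smul₀] at h2
    have : ‖d‖ = d := abs_of_pos hd
    rw [this] at h2
    have h3 : d * dist y z ≤ d * (infDist y Z + ε / d) := le_of_lt (mul_lt_mul_of_pos_left hzd hd)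
    have h4 : d * (infDist y Z + ε / d) = d * infDist y Z + ε := by field_simp
    linarith
  refine le_antisymm (key c hc x) ?_
  have h2 := key c⁻¹ (by positivity) (c • x)
  rw [inv_smul_smul₀ (ne_of_gt hc)] at h2
  have hc' : c ≠ 0 := ne_of_gt hc
  calc c * infDist x Z ≤ c * (c⁻¹ * infDist (c • x) Z) := by
        exact mul_le_mul_of_nonneg_left h2 (le_of_lt hc)
    _ = infDist (c • x) Z := by field_simp

end Gave
section P2
open Matrix Metric Filter
variable {m n : ℕ}

lemma abs_add_sign {z g : ℝ} (hz : z ≠ 0) (h : |g| ≤ |z|) : |z + g| = |z| + Real.sign z * g := by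
  rcases lt_or_gt_of_ne hz with hneg | hpos
  · rw [Real.sign_of_neg hneg]
    have h1 : z + g ≤ 0 := by
      have := abs_le.mp h; have : g ≤ |z| := le_trans (le_abs_self g) h
      rw [abs_of_neg hneg] at this; linarith
    rw [abs_of_nonpos h1, abs_of_neg hneg]; ring
  · rw [Real.sign_of_pos hpos]
    have h1 : 0 ≤ z + g := by
      have : -g ≤ |z| := le_trans (neg_le_abs g) h
      rw [abs_of_pos hpos] at this; linarith
    rw [abs_of_nonneg h1, abs_of_pos hpos]; ring

open Classical in
/-- The set of coordinates of `S` where `z` vanishes. -/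
noncomputable def zedset (S : Finset (Fin n)) (z : Fin n → ℝ) : Finset (Fin n) :=
  S.filter (fun j => z j = 0)

/-- The matrix of the local linearization of `phl M B S` at `z`. -/
noncomputable def Mloc (M B : Matrix (Fin m) (Fin n) ℝ) (S : Finset (Fin n)) (z : Fin n → ℝ) :
    Matrix (Fin m) (Fin n) ℝ :=
  M - B * Matrix.diagonal (fun j => if j ∈ S ∧ z j ≠ 0 then Real.sign (z j) - 1 else 0)

lemma zedset_subset (S : Finset (Fin n)) (z : Fin n → ℝ) : zedset S z ⊆ S :=
  Finset.filter_subset _ _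

lemma mem_zedset {S : Finset (Fin n)} {z : Fin n → ℝ} {j : Fin n} :
    j ∈ zedset S z ↔ j ∈ S ∧ z j = 0 := by
  simp [zedset]

lemma phl_localize (M B : Matrix (Fin m) (Fin n) ℝ) (S : Finset (Fin n)) (z g : Fin n → ℝ)
    (hg : ∀ j ∈ S, z j ≠ 0 → |g j| ≤ |z j|) :
    phl M B S (z + g) = phl M B S z + phl (Mloc M B S z) B (zedset S z) g := by
  unfold phl Mloc
  have key : (fun j => if j ∈ S then |(z + g) j| else (z + g) j)
      = (fun j => if j ∈ S then |z j| else z j)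
        + ((Matrix.diagonal (fun j => if j ∈ S ∧ z j ≠ 0 then Real.sign (z j) - 1 else 0)) *ᵥ g
        + fun j => if j ∈ zedset S z then |g j| else g j) := by
    funext j
    simp only [Pi.add_apply, Matrix.mulVec_diagonal]
    by_cases hjS : j ∈ S
    · by_cases hjz : z j = 0
      · have : j ∈ zedset S z := mem_zedset.mpr ⟨hjS, hjz⟩
        simp [hjS, hjz, this]
      · have hj' : j ∉ zedset S z := fun hc => hjz (mem_zedset.mp hc).2
        simp only [hjS, if_pos, hj', if_neg, ite_true, ite_false]
        rw [abs_add_sign hjz (hg j hjS hjz)]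
        simp [hjS, hjz]
        ring
    · have hj' : j ∉ zedset S z := fun hc => hjS (mem_zedset.mp hc).1
      simp [hjS, hj']
  rw [key, Matrix.mulVec_add, Matrix.mulVec_add, Matrix.mulVec_add, Matrix.sub_mulVec, ← Matrix.mulVec_mulVec]
  abel

end P2
section P3
open Matrix Metric Filter
variable {m n : ℕ}

/-- Zero set of `phl M B S`, as a subset of Euclidean space. -/
def Zset (M B : Matrix (Fin m) (Fin n) ℝ) (S : Finset (Fin n)) : Set (Ee n) :=
  {x : Ee n | phl M B S x = 0}

lemma Zset_zero_mem (M B : Matrix (Fin m) (Fin n) ℝ) (S : Finset (Fin n)) :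
    (0 : Ee n) ∈ Zset M B S := phl_zero M B S

lemma Zset_closed (M B : Matrix (Fin m) (Fin n) ℝ) (S : Finset (Fin n)) :
    IsClosed (Zset M B S) := by
  have : Zset M B S = (fun x : Ee n => toE (phl M B S x)) ⁻¹' {0} := by
    ext x; simp only [Zset, Set.mem_setOf_eq, Set.mem_preimage, Set.mem_singleton_iff]
    exact ⟨fun h => by rw [h]; rfl, fun h => congrArg WithLp.ofLp h⟩
  rw [this]
  exact IsClosed.preimage (phl_continuousE M B S) isClosed_singleton

lemma Zset_cone (M B : Matrix (Fin m) (Fin n) ℝ) (S : Finset (Fin n)) :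
    ∀ t : ℝ, 0 < t → ∀ z ∈ Zset M B S, t • z ∈ Zset M B S := by
  intro t ht z hz
  show phl M B S (t • z) = 0
  calc phl M B S (t • z) = t • phl M B S z := phl_smul M B S t ht.le z
    _ = 0 := by rw [show phl M B S z = 0 from hz]; simp

/-- The lineality subspace of `phl M B S`. -/
def Lsub (M B : Matrix (Fin m) (Fin n) ℝ) (S : Finset (Fin n)) : Submodule ℝ (Ee n) where
  carrier := {v : Ee n | (∀ j ∈ S, v j = 0) ∧
    M.mulVec v - B.mulVec (fun j => if j ∈ S then 0 else v j) = 0}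
  zero_mem' := by
    refine ⟨fun j _ => rfl, ?_⟩
    have h : (fun j => if j ∈ S then 0 else (0 : Ee n) j) = (0 : Fin n → ℝ) := by
      funext j; by_cases hj : j ∈ S <;> simp [hj]
    show M.mulVec 0 - B.mulVec (fun j => if j ∈ S then 0 else (0 : Ee n) j) = 0
    rw [h, Matrix.mulVec_zero, Matrix.mulVec_zero, sub_zero]
  add_mem' := by
    rintro a b ⟨ha1, ha2⟩ ⟨hb1, hb2⟩
    refine ⟨fun j hj => by show a j + b j = 0; rw [ha1 j hj, hb1 j hj, add_zero], ?_⟩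
    have h : (fun j => if j ∈ S then 0 else (a + b : Ee n) j)
        = (fun j => if j ∈ S then 0 else a j) + (fun j => if j ∈ S then 0 else b j) := by
      funext j; by_cases hj : j ∈ S <;> simp [hj]
    show M.mulVec (a + b) - B.mulVec _ = 0
    rw [h, Matrix.mulVec_add (A := M), Matrix.mulVec_add (A := B)]
    have := congrArg₂ (· + ·) ha2 hb2
    simpa [sub_add_sub_comm] using this
  smul_mem' := by
    rintro c a ⟨ha1, ha2⟩
    refine ⟨fun j hj => by show c * a j = 0; rw [ha1 j hj, mul_zero], ?_⟩
    have h : (fun j => if j ∈ S then 0 else (c • a : Ee n) j)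
        = c • (fun j => if j ∈ S then 0 else a j) := by
      funext j; by_cases hj : j ∈ S <;> simp [hj]
    show M.mulVec (c • a) - B.mulVec _ = 0
    rw [h, Matrix.mulVec_smul, Matrix.mulVec_smul, ← smul_sub, ha2, smul_zero]

lemma phl_add_of_mem_L (M B : Matrix (Fin m) (Fin n) ℝ) (S : Finset (Fin n)) (x : Ee n)
    {v : Ee n} (hv : v ∈ Lsub M B S) : phl M B S (x + v) = phl M B S x := by
  obtain ⟨hv1, hv2⟩ := hv
  unfold phl
  have h : (fun j => if j ∈ S then |((x : Fin n → ℝ) + v) j| else ((x : Fin n → ℝ) + v) j)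
      = (fun j => if j ∈ S then |x j| else x j) + (fun j => if j ∈ S then 0 else v j) := by
    funext j
    by_cases hj : j ∈ S
    · simp only [hj, if_true, Pi.add_apply]
      show |x j + v j| = |x j| + 0
      rw [hv1 j hj, add_zero, add_zero]
    · simp only [hj, if_false, Pi.add_apply]
  rw [h, Matrix.mulVec_add (A := M), Matrix.mulVec_add (A := B)]
  have : M.mulVec v - B.mulVec (fun j => if j ∈ S then 0 else v j) = 0 := hv2
  have h2 : M.mulVec v = B.mulVec (fun j => if j ∈ S then 0 else v j) := by
    rwa [sub_eq_zero] at this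
  rw [h2]; abel

lemma infDist_add_L_le (M B : Matrix (Fin m) (Fin n) ℝ) (S : Finset (Fin n)) (x : Ee n)
    {v : Ee n} (hv : v ∈ Lsub M B S) :
    infDist (x + v) (Zset M B S) ≤ infDist x (Zset M B S) := by
  refine le_of_forall_pos_le_add ?_
  intro ε hε
  have hne : (Zset M B S).Nonempty := ⟨0, Zset_zero_mem M B S⟩
  have h1 : infDist x (Zset M B S) < infDist x (Zset M B S) + ε := by linarith
  obtain ⟨z, hzZ, hzd⟩ := (Metric.infDist_lt_iff hne).mp h1
  have hzv : z + v ∈ Zset M B S := by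
    show phl M B S (z + v) = 0
    rw [phl_add_of_mem_L M B S z hv]; exact hzZ
  have : infDist (x + v) (Zset M B S) ≤ dist (x + v) (z + v) :=
    Metric.infDist_le_dist_of_mem hzv
  rw [dist_add_right] at this
  linarith

lemma infDist_sub_L (M B : Matrix (Fin m) (Fin n) ℝ) (S : Finset (Fin n)) (x : Ee n)
    {v : Ee n} (hv : v ∈ Lsub M B S) :
    infDist (x - v) (Zset M B S) = infDist x (Zset M B S) := by
  refine le_antisymm ?_ ?_
  · have := infDist_add_L_le M B S x (neg_mem hv)
    simpa [sub_eq_add_neg] using this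
  · have := infDist_add_L_le M B S (x - v) hv
    simpa using this

end P3
section P4
open Matrix Metric Filter
variable {m n : ℕ}

lemma exists_orth_rep (M B : Matrix (Fin m) (Fin n) ℝ) (S : Finset (Fin n)) (y : Ee n) :
    ∃ w ∈ (Lsub M B S)ᗮ, phl M B S w = phl M B S y ∧
      infDist w (Zset M B S) = infDist y (Zset M B S) := by
  obtain ⟨v, hv, w, hw, hyvw⟩ := (Lsub M B S).exists_add_mem_mem_orthogonal y
  have hwy : w = y - v := by rw [hyvw]; abel
  refine ⟨w, hw, ?_, ?_⟩
  · rw [hwy, sub_eq_add_neg]; exact phl_add_of_mem_L M B S y (neg_mem hv)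
  · rw [hwy, infDist_sub_L M B S y hv]

/-- Error bound for homogeneous piecewise linear maps, by induction on the set of
absolute-value coordinates. -/
theorem phl_errbound (S : Finset (Fin n)) : ∀ (M B : Matrix (Fin m) (Fin n) ℝ),
    ∃ κ : ℝ, 0 < κ ∧ ∀ x : Ee n, κ * infDist x (Zset M B S) ≤ ‖toE (phl M B S x)‖ := by
  induction S using Finset.strongInduction with
  | _ S IH =>
  intro M B
  by_contra hcon
  push_neg at hcon
  set Z : Set (Ee n) := Zset M B S with hZ
  have hZ0 : (0 : Ee n) ∈ Z := Zset_zero_mem M B S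
  have hZne : Z.Nonempty := ⟨0, hZ0⟩
  have hZcone := Zset_cone M B S
  have hx : ∀ k : ℕ, ∃ x : Ee n,
      ‖toE (phl M B S x)‖ < (1 / (k + 1 : ℝ)) * infDist x Z := by
    intro k
    obtain ⟨x, hx⟩ := hcon (1 / (k + 1 : ℝ)) (by positivity)
    exact ⟨x, hx⟩
  choose xx hxx using hx
  have hdx : ∀ k, 0 < infDist (xx k) Z := by
    intro k
    by_contra hneg
    push_neg at hneg
    have h1 : (1 / (k + 1 : ℝ)) * infDist (xx k) Z ≤ 0 := by
      apply mul_nonpos_of_nonneg_of_nonpos (by positivity) hneg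
    exact absurd (lt_of_le_of_lt (norm_nonneg _) (lt_of_lt_of_le (hxx k) h1)) (lt_irrefl 0)
  have hw' : ∀ k : ℕ, ∃ w ∈ (Lsub M B S)ᗮ, phl M B S w = phl M B S (xx k) ∧
      infDist w Z = infDist (xx k) Z := fun k => exists_orth_rep M B S (xx k)
  choose ww hw1 hw2 hw3 using hw'
  have hwne : ∀ k, (0:ℝ) < ‖ww k‖ := by
    intro k
    rcases eq_or_lt_of_le (norm_nonneg (ww k)) with h | h
    · exfalso
      have h0 : ww k = 0 := norm_eq_zero.mp h.symm
      have hz : infDist (ww k) Z = 0 := by rw [h0]; exact Metric.infDist_zero_of_mem hZ0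
      rw [hw3] at hz
      exact absurd hz (ne_of_gt (hdx k))
    · exact h
  set u : ℕ → Ee n := fun k => ‖ww k‖⁻¹ • ww k with hu
  have hcpos : ∀ k, (0:ℝ) < ‖ww k‖⁻¹ := fun k => inv_pos.mpr (hwne k)
  have hun : ∀ k, ‖u k‖ = 1 := by
    intro k
    rw [hu]
    simp only [norm_smul, Real.norm_eq_abs, abs_of_pos (hcpos k)]
    exact inv_mul_cancel₀ (ne_of_gt (hwne k))
  have hphlu : ∀ k, toE (phl M B S (u k)) = ‖ww k‖⁻¹ • toE (phl M B S (ww k)) :=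
    fun k => congrArg toE (phl_smul M B S _ (le_of_lt (hcpos k)) (ww k))
  have hdu : ∀ k, infDist (u k) Z = ‖ww k‖⁻¹ * infDist (xx k) Z := by
    intro k
    rw [hu]
    rw [infDist_smul_cone hZcone hZ0 (hcpos k), hw3]
  have hdupos : ∀ k, 0 < infDist (u k) Z := by
    intro k; rw [hdu]; exact mul_pos (hcpos k) (hdx k)
  have huratio : ∀ k, ‖toE (phl M B S (u k))‖ < (1 / (k + 1 : ℝ)) * infDist (u k) Z := by
    intro k
    rw [hphlu, norm_smul, Real.norm_eq_abs, abs_of_pos (hcpos k), hdu, hw2]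
    calc ‖ww k‖⁻¹ * ‖toE (phl M B S (xx k))‖
        < ‖ww k‖⁻¹ * ((1 / (k + 1 : ℝ)) * infDist (xx k) Z) :=
          mul_lt_mul_of_pos_left (hxx k) (hcpos k)
      _ = 1 / (k + 1 : ℝ) * (‖ww k‖⁻¹ * infDist (xx k) Z) := by ring
  have huL : ∀ k, u k ∈ (Lsub M B S)ᗮ := fun k => Submodule.smul_mem _ _ (hw1 k)
  have huball : ∀ k, u k ∈ Metric.closedBall (0 : Ee n) 1 := by
    intro k
    rw [Metric.mem_closedBall, dist_zero_right, hun k]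
  obtain ⟨ub, _, φ, hφ, hlim⟩ :=
    (isCompact_closedBall (0 : Ee n) 1).tendsto_subseq huball
  have hubnorm : ‖ub‖ = 1 := by
    have h1 : Tendsto (fun k => ‖u (φ k)‖) atTop (nhds ‖ub‖) := (continuous_norm.tendsto ub).comp hlim
    have h2 : (fun k => ‖u (φ k)‖) = fun _ => (1:ℝ) := by funext k; exact hun (φ k)
    rw [h2] at h1
    exact (tendsto_const_nhds_iff.mp h1).symm
  have hubL : ub ∈ (Lsub M B S)ᗮ := by
    have : IsClosed ((Lsub M B S)ᗮ : Set (Ee n)) := (Lsub M B S).isClosed_orthogonal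
    exact this.mem_of_tendsto hlim (Eventually.of_forall fun k => huL (φ k))
  have hubZ : phl M B S ub = 0 := by
    have h1 : Tendsto (fun k => ‖toE (phl M B S (u (φ k)))‖) atTop
        (nhds ‖toE (phl M B S ub)‖) :=
      ((continuous_norm.comp (phl_continuousE M B S)).tendsto ub).comp hlim
    have h2 : Tendsto (fun k => ‖toE (phl M B S (u (φ k)))‖) atTop (nhds 0) := by
      apply squeeze_zero (fun k => norm_nonneg _) (g := fun k : ℕ => 1 / ((φ k : ℝ) + 1))
      · intro k
        have h3 : infDist (u (φ k)) Z ≤ 1 := by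
          have := Metric.infDist_le_dist_of_mem (x := u (φ k)) hZ0
          rwa [dist_zero_right, hun (φ k)] at this
        have h4 := le_of_lt (huratio (φ k))
        have hp : (0:ℝ) < 1 / ((φ k : ℝ) + 1) := by positivity
        have h5 : (1 / ((φ k : ℝ) + 1)) * infDist (u (φ k)) Z ≤ 1 / ((φ k : ℝ) + 1) := by
          nlinarith [mul_le_mul_of_nonneg_left h3 hp.le]
        linarith
      · have hcomp : Tendsto (fun k : ℕ => ((φ k : ℝ))) atTop atTop := by
          apply tendsto_natCast_atTop_atTop.comp hφ.tendsto_atTop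
        have := (tendsto_one_div_add_atTop_nhds_zero_nat (𝕜 := ℝ)).comp hφ.tendsto_atTop
        exact this
    have := tendsto_nhds_unique h1 h2
    rw [norm_eq_zero] at this
    exact congrArg WithLp.ofLp this
  by_cases hA : ∀ j ∈ S, ub j = 0
  · -- Case A : `ub ∈ L ⊓ Lᗮ = ⊥`, contradicting `‖ub‖ = 1`.
    have hmem : ub ∈ Lsub M B S := by
      refine ⟨hA, ?_⟩
      have h : (fun j => if j ∈ S then |ub j| else ub j)
          = (fun j => if j ∈ S then 0 else ub j) := by
        funext j; by_cases hj : j ∈ S <;> simp [hj, hA]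
      have h2 := hubZ
      unfold phl at h2
      rw [h] at h2
      exact h2
    have hub0 : ub = 0 := by
      have h0 := (Submodule.mem_orthogonal _ ub).mp hubL ub hmem
      exact inner_self_eq_zero.mp h0
    rw [hub0, norm_zero] at hubnorm
    exact absurd hubnorm (by norm_num)
  · push_neg at hA
    obtain ⟨j₀, hj₀S, hj₀⟩ := hA
    classical
    set S' : Finset (Fin n) := zedset S ub with hS'
    have hssub : S' ⊂ S := by
      refine ⟨zedset_subset S ub, fun hsub => hj₀ ?_⟩
      exact (mem_zedset.mp (hsub hj₀S)).2
    obtain ⟨κ', hκ'pos, hκ'⟩ := IH S' hssub (Mloc M B S ub) B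
    set Z' : Set (Ee n) := Zset (Mloc M B S ub) B S' with hZ'd
    set T : Finset (Fin n) := S.filter (fun j => ¬ (ub j = 0)) with hT
    have hj₀T : j₀ ∈ T := by
      rw [hT, Finset.mem_filter]; exact ⟨hj₀S, hj₀⟩
    have hTne : T.Nonempty := ⟨j₀, hj₀T⟩
    set δ : ℝ := T.inf' hTne (fun j => |ub j|) with hδ
    have hδpos : 0 < δ := by
      rw [hδ, Finset.lt_inf'_iff]
      intro j hj
      exact abs_pos.mpr (Finset.mem_filter.mp hj).2
    have hloc : ∀ g : Ee n, ‖g‖ < δ →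
        phl M B S (ub + g) = phl (Mloc M B S ub) B S' g := by
      intro g hg
      have hcond : ∀ j ∈ S, ub j ≠ 0 → |g j| ≤ |ub j| := by
        intro j hj hjz
        have h1 : |g j| ≤ ‖g‖ := abs_apply_le_norm g j
        have h2 : δ ≤ |ub j| := by
          rw [hδ]
          exact Finset.inf'_le _ (by rw [hT, Finset.mem_filter]; exact ⟨hj, hjz⟩)
        linarith
      have h := phl_localize M B S ub g hcond
      rw [hubZ, zero_add] at h
      exact h
    have hdist : ∀ g : Ee n, ‖g‖ < δ/4 → infDist (ub + g) Z ≤ infDist g Z' := by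
      intro g hg
      refine le_of_forall_pos_le_add ?_
      intro ε hε
      set ε' : ℝ := min ε (δ/4) with hε'd
      have hε'pos : 0 < ε' := lt_min hε (by linarith)
      have hZ'ne : Z'.Nonempty := ⟨0, Zset_zero_mem _ _ _⟩
      obtain ⟨z', hz'Z, hz'd⟩ := (Metric.infDist_lt_iff hZ'ne).mp
        (show infDist g Z' < infDist g Z' + ε' by linarith)
      have hgZ' : infDist g Z' ≤ ‖g‖ := by
        have h := Metric.infDist_le_dist_of_mem (x := g) (Zset_zero_mem (Mloc M B S ub) B S')
        rwa [dist_zero_right] at h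
      have hz'norm : ‖z'‖ < δ := by
        have h1 : ‖z'‖ ≤ ‖g‖ + dist g z' := by
          rw [dist_eq_norm]
          have h2 := norm_sub_norm_le g z'
          have h3 := abs_le.mp (le_refl |‖g‖ - ‖z'‖|) |>.1
          have := abs_norm_sub_norm_le g z'
          linarith [abs_le.mp this |>.1]
        have h4 : ε' ≤ δ/4 := min_le_right _ _
        linarith
      have hzZ : ub + z' ∈ Z := by
        show phl M B S (ub + z') = 0
        rw [hloc z' hz'norm]
        exact hz'Z
      have h5 : infDist (ub + g) Z ≤ dist (ub + g) (ub + z') :=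
        Metric.infDist_le_dist_of_mem hzZ
      rw [dist_add_left] at h5
      have h6 : ε' ≤ ε := min_le_left _ _
      linarith
    have hev1 : ∀ᶠ k in atTop, dist (u (φ k)) ub < δ/4 :=
      Metric.tendsto_nhds.mp hlim (δ/4) (by linarith)
    have hev2 : ∀ᶠ k in atTop, 1/((φ k : ℝ)+1) < κ' := by
      have h := (tendsto_one_div_add_atTop_nhds_zero_nat (𝕜 := ℝ)).comp hφ.tendsto_atTop
      exact h.eventually_lt_const hκ'pos
    obtain ⟨k, hk1, hk2⟩ := (hev1.and hev2).exists
    set g : Ee n := u (φ k) - ub with hgd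
    have hgnorm : ‖g‖ < δ/4 := by
      rw [hgd, ← dist_eq_norm]
      exact hk1
    have hxe : ub + g = u (φ k) := by rw [hgd]; abel
    have e1 : κ' * infDist g Z' ≤ ‖toE (phl (Mloc M B S ub) B S' g)‖ := hκ' g
    have e2 : phl (Mloc M B S ub) B S' g = phl M B S (u (φ k)) := by
      rw [← hloc g (by linarith), ← hxe]
      rfl
    have e3 : infDist (u (φ k)) Z ≤ infDist g Z' := by
      rw [← hxe]
      exact hdist g hgnorm
    have e4 := huratio (φ k)
    have hd'pos : 0 < infDist g Z' := lt_of_lt_of_le (hdupos (φ k)) e3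
    rw [e2] at e1
    have ppos : (0:ℝ) < 1/((φ k : ℝ)+1) := by positivity
    have e5 : (1/((φ k : ℝ)+1)) * infDist (u (φ k)) Z ≤ (1/((φ k : ℝ)+1)) * infDist g Z' :=
      mul_le_mul_of_nonneg_left e3 ppos.le
    have e6 : (1/((φ k : ℝ)+1)) * infDist g Z' < κ' * infDist g Z' :=
      mul_lt_mul_of_pos_right hk2 hd'pos
    linarith
end P4
section P5
open Matrix Metric Filter
variable {m n : ℕ}

lemma phl_univ (A B : Matrix (Fin m) (Fin n) ℝ) (x : Fin n → ℝ) :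
    phl A B Finset.univ x = A.mulVec x - B.mulVec (fun j => |x j|) := by
  unfold phl
  simp

lemma vnorm_eq {k : ℕ} (v : Fin k → ℝ) : vnorm v = ‖toE v‖ := by
  rw [EuclideanSpace.norm_eq, vnorm]
  congr 1
  apply Finset.sum_congr rfl
  intro i _
  rw [Real.norm_eq_abs, sq_abs]
  rfl

/-- The global error bound, in Euclidean space formulation. -/
theorem gave_euclidean (A B : Matrix (Fin m) (Fin n) ℝ) (b : Fin m → ℝ)
    (hne : ∃ x : Fin n → ℝ, A.mulVec x - B.mulVec (fun j => |x j|) = b)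
    (hzero : ∀ x : Fin n → ℝ, A.mulVec x - B.mulVec (fun j => |x j|) = 0 → x = 0) :
    ∃ κ : ℝ, 0 < κ ∧ ∀ x : Ee n,
      κ * infDist x {y : Ee n | phl A B Finset.univ y = b} ≤
        ‖toE (phl A B Finset.univ x) - toE b‖ := by
  classical
  obtain ⟨y₀, hy₀⟩ := hne
  set Sol : Set (Ee n) := {y : Ee n | phl A B Finset.univ y = b} with hSol
  have hy₀Sol : toE y₀ ∈ Sol := by
    show phl A B Finset.univ y₀ = b
    rw [phl_univ]; exact hy₀
  have hSolne : Sol.Nonempty := ⟨_, hy₀Sol⟩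
  obtain ⟨κ₀, hκ₀pos, hκ₀⟩ := phl_errbound (Finset.univ : Finset (Fin n)) A B
  have hZfull : Zset A B Finset.univ = {(0 : Ee n)} := by
    apply Set.eq_singleton_iff_unique_mem.mpr
    refine ⟨Zset_zero_mem A B Finset.univ, ?_⟩
    intro z hz
    have h1 : A.mulVec z - B.mulVec (fun j => |z j|) = 0 := by
      rw [← phl_univ]; exact hz
    exact congrArg (WithLp.toLp 2) (hzero z h1)
  have hcoer : ∀ x : Ee n, κ₀ * ‖x‖ ≤ ‖toE (phl A B Finset.univ x)‖ := by
    intro x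
    have h := hκ₀ x
    rw [hZfull, Metric.infDist_singleton, dist_zero_right] at h
    exact h
  set bE : Ee m := toE b with hbE
  set Fm : Ee n → Ee m := fun x => toE (phl A B Finset.univ x) - bE with hFm
  have hFmgoal : ∀ x : Ee n, ‖toE (phl A B Finset.univ x) - toE b‖ = ‖Fm x‖ := fun _ => rfl
  have hFmcont : Continuous Fm :=
    (phl_continuousE A B Finset.univ).sub continuous_const
  by_contra hcon
  push_neg at hcon
  simp only [hFmgoal] at hcon
  set κs : ℕ → ℝ := fun k => min (1/(k+1 : ℝ)) (κ₀/2) with hκs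
  have hκspos : ∀ k, 0 < κs k := fun k => lt_min (by positivity) (by linarith)
  have hx : ∀ k : ℕ, ∃ x : Ee n, ‖Fm x‖ < κs k * infDist x Sol := by
    intro k
    obtain ⟨x, hx⟩ := hcon (κs k) (hκspos k)
    exact ⟨x, hx⟩
  choose xx hxx using hx
  have hdx : ∀ k, 0 < infDist (xx k) Sol := by
    intro k
    by_contra hneg
    push_neg at hneg
    have h1 : κs k * infDist (xx k) Sol ≤ 0 :=
      mul_nonpos_of_nonneg_of_nonpos (hκspos k).le hneg
    exact absurd (lt_of_le_of_lt (norm_nonneg _) (lt_of_lt_of_le (hxx k) h1)) (lt_irrefl 0)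
  have hdub : ∀ k, infDist (xx k) Sol ≤ ‖xx k‖ + ‖toE y₀‖ := by
    intro k
    have h := Metric.infDist_le_dist_of_mem (x := xx k) hy₀Sol
    calc infDist (xx k) Sol ≤ dist (xx k) (toE y₀) := h
      _ ≤ ‖xx k‖ + ‖toE y₀‖ := by
          rw [dist_eq_norm]; exact norm_sub_le _ _
  set R : ℝ := ‖toE y₀‖ + 2*‖bE‖/κ₀ + 1 with hR
  have hxxball : ∀ k, xx k ∈ Metric.closedBall (0 : Ee n) R := by
    intro k
    rw [Metric.mem_closedBall, dist_zero_right]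
    have h1 : κ₀ * ‖xx k‖ ≤ ‖Fm (xx k)‖ + ‖bE‖ := by
      have h2 := hcoer (xx k)
      have h3 : toE (phl A B Finset.univ (xx k)) = Fm (xx k) + bE := by
        rw [hFm]; simp
      rw [h3] at h2
      have h4 := norm_add_le (Fm (xx k)) bE
      linarith
    have h4 : ‖Fm (xx k)‖ ≤ (κ₀/2) * (‖xx k‖ + ‖toE y₀‖) := by
      have h5 := le_of_lt (hxx k)
      have h6 : κs k ≤ κ₀/2 := min_le_right _ _
      have h7 : κs k * infDist (xx k) Sol ≤ (κ₀/2) * (‖xx k‖ + ‖toE y₀‖) := by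
        apply mul_le_mul h6 (hdub k) (Metric.infDist_nonneg) (by linarith)
      linarith
    have h9 : κ₀/2 * ‖xx k‖ ≤ κ₀/2 * ‖toE y₀‖ + ‖bE‖ := by linarith
    have h10 : ‖xx k‖ ≤ (κ₀/2 * ‖toE y₀‖ + ‖bE‖)/(κ₀/2) := by
      rw [le_div_iff₀ (by linarith : (0:ℝ) < κ₀/2)]
      linarith [h9]
    have h11 : (κ₀/2 * ‖toE y₀‖ + ‖bE‖)/(κ₀/2) = ‖toE y₀‖ + 2*‖bE‖/κ₀ := by
      field_simp
    rw [hR]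
    linarith
  obtain ⟨xb, _, φ, hφ, hlim⟩ := (isCompact_closedBall (0 : Ee n) R).tendsto_subseq hxxball
  have hxbSol : xb ∈ Sol := by
    have h1 : Tendsto (fun k => ‖Fm (xx (φ k))‖) atTop (nhds ‖Fm xb‖) :=
      ((continuous_norm.comp hFmcont).tendsto xb).comp hlim
    have h2 : Tendsto (fun k => ‖Fm (xx (φ k))‖) atTop (nhds 0) := by
      apply squeeze_zero (fun k => norm_nonneg _)
        (g := fun k : ℕ => (1/((φ k : ℝ)+1)) * (R + ‖toE y₀‖))
      · intro k
        have h3 := le_of_lt (hxx (φ k))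
        have h4 : κs (φ k) ≤ 1/((φ k : ℝ)+1) := min_le_left _ _
        have h5 : infDist (xx (φ k)) Sol ≤ R + ‖toE y₀‖ := by
          have h6 := hdub (φ k)
          have h7 : ‖xx (φ k)‖ ≤ R := by
            have := hxxball (φ k)
            rwa [Metric.mem_closedBall, dist_zero_right] at this
          linarith
        have hp : (0:ℝ) < 1/((φ k : ℝ)+1) := by positivity
        calc ‖Fm (xx (φ k))‖ ≤ κs (φ k) * infDist (xx (φ k)) Sol := h3
          _ ≤ (1/((φ k : ℝ)+1)) * (R + ‖toE y₀‖) := by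
              apply mul_le_mul h4 h5 Metric.infDist_nonneg hp.le
      · have h := (tendsto_one_div_add_atTop_nhds_zero_nat (𝕜 := ℝ)).comp hφ.tendsto_atTop
        have := h.mul_const (R + ‖toE y₀‖)
        simpa using this
    have h8 := tendsto_nhds_unique h1 h2
    rw [norm_eq_zero, hFm, sub_eq_zero] at h8
    show phl A B Finset.univ xb = b
    exact congrArg WithLp.ofLp h8
  set S' : Finset (Fin n) := zedset Finset.univ xb with hS'
  set M' : Matrix (Fin m) (Fin n) ℝ := Mloc A B Finset.univ xb with hM'
  obtain ⟨κ', hκ'pos, hκ'⟩ := phl_errbound S' M' B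
  set Z' : Set (Ee n) := Zset M' B S' with hZ'
  have hδex : ∃ δ : ℝ, 0 < δ ∧ ∀ j : Fin n, xb j ≠ 0 → δ ≤ |xb j| := by
    rcases Finset.eq_empty_or_nonempty (Finset.univ.filter fun j : Fin n => ¬(xb j = 0))
      with he | hne'
    · refine ⟨1, one_pos, fun j hj => ?_⟩
      exfalso
      have hmem : j ∈ Finset.univ.filter (fun j : Fin n => ¬(xb j = 0)) :=
        Finset.mem_filter.mpr ⟨Finset.mem_univ j, hj⟩
      rw [he] at hmem
      exact Finset.notMem_empty _ hmem
    · refine ⟨(Finset.univ.filter fun j : Fin n => ¬(xb j = 0)).inf' hne' (fun j => |xb j|),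
        ?_, ?_⟩
      · rw [Finset.lt_inf'_iff]
        intro j hj
        exact abs_pos.mpr (Finset.mem_filter.mp hj).2
      · intro j hj
        exact Finset.inf'_le (fun j => |xb j|) (Finset.mem_filter.mpr ⟨Finset.mem_univ j, hj⟩)
  obtain ⟨δ, hδpos, hδ⟩ := hδex
  have hloc : ∀ g : Ee n, ‖g‖ < δ → Fm (xb + g) = toE (phl M' B S' g) := by
    intro g hg
    have hcond : ∀ j ∈ (Finset.univ : Finset (Fin n)), xb j ≠ 0 → |g j| ≤ |xb j| := by
      intro j _ hjz
      have h1 : |g j| ≤ ‖g‖ := abs_apply_le_norm g j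
      have h2 := hδ j hjz
      linarith
    have h := phl_localize A B Finset.univ xb g hcond
    rw [show phl A B Finset.univ xb = b from hxbSol] at h
    have h2 : toE (phl A B Finset.univ (xb + g)) = bE + toE (phl M' B S' g) := congrArg toE h
    show toE (phl A B Finset.univ (xb + g)) - bE = toE (phl M' B S' g)
    rw [h2]
    abel
  have hdist : ∀ g : Ee n, ‖g‖ < δ/4 → infDist (xb + g) Sol ≤ infDist g Z' := by
    intro g hg
    refine le_of_forall_pos_le_add ?_
    intro ε hε
    set ε' : ℝ := min ε (δ/4) with hε'd
    have hε'pos : 0 < ε' := lt_min hε (by linarith)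
    have hZ'ne : Z'.Nonempty := ⟨0, Zset_zero_mem _ _ _⟩
    obtain ⟨z', hz'Z, hz'd⟩ := (Metric.infDist_lt_iff hZ'ne).mp
      (show infDist g Z' < infDist g Z' + ε' by linarith)
    have hgZ' : infDist g Z' ≤ ‖g‖ := by
      have h := Metric.infDist_le_dist_of_mem (x := g) (Zset_zero_mem M' B S')
      rwa [dist_zero_right] at h
    have hz'norm : ‖z'‖ < δ := by
      have h1 : ‖z'‖ ≤ ‖g‖ + dist g z' := by
        rw [dist_eq_norm]
        have := abs_norm_sub_norm_le g z'
        linarith [abs_le.mp this |>.1]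
      have h4 : ε' ≤ δ/4 := min_le_right _ _
      linarith
    have hzZ : xb + z' ∈ Sol := by
      show phl A B Finset.univ (xb + z') = b
      have h := hloc z' hz'norm
      rw [show toE (phl M' B S' z') = 0 from congrArg toE hz'Z, hFm] at h
      have h2 : toE (phl A B Finset.univ (xb + z')) = bE := by
        have := sub_eq_zero.mp h
        exact this
      exact congrArg WithLp.ofLp h2
    have h5 : infDist (xb + g) Sol ≤ dist (xb + g) (xb + z') :=
      Metric.infDist_le_dist_of_mem hzZ
    rw [dist_add_left] at h5
    have h6 : ε' ≤ ε := min_le_left _ _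
    linarith
  have hev1 : ∀ᶠ k in atTop, dist (xx (φ k)) xb < δ/4 :=
    Metric.tendsto_nhds.mp hlim (δ/4) (by linarith)
  have hev2 : ∀ᶠ k in atTop, 1/((φ k : ℝ)+1) < κ' := by
    have h := (tendsto_one_div_add_atTop_nhds_zero_nat (𝕜 := ℝ)).comp hφ.tendsto_atTop
    exact h.eventually_lt_const hκ'pos
  obtain ⟨k, hk1, hk2⟩ := (hev1.and hev2).exists
  set g : Ee n := xx (φ k) - xb with hgd
  have hgnorm : ‖g‖ < δ/4 := by
    rw [hgd, ← dist_eq_norm]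
    exact hk1
  have hxe : xb + g = xx (φ k) := by rw [hgd]; abel
  have e1 : κ' * infDist g Z' ≤ ‖toE (phl M' B S' g)‖ := hκ' g
  have e2 : toE (phl M' B S' g) = Fm (xx (φ k)) := by
    rw [← hloc g (by linarith), hxe]
  have e2' : ‖toE (phl M' B S' g)‖ = ‖Fm (xx (φ k))‖ := congrArg norm e2
  have e3 : infDist (xx (φ k)) Sol ≤ infDist g Z' := by
    rw [← hxe]
    exact hdist g hgnorm
  have e4 := hxx (φ k)
  have hd'pos : 0 < infDist g Z' := lt_of_lt_of_le (hdx (φ k)) e3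
  rw [e2'] at e1
  have h4 : κs (φ k) ≤ 1/((φ k : ℝ)+1) := min_le_left _ _
  have e5 : κs (φ k) * infDist (xx (φ k)) Sol ≤ (1/((φ k : ℝ)+1)) * infDist g Z' := by
    apply mul_le_mul h4 e3 Metric.infDist_nonneg (by positivity)
  have e6 : (1/((φ k : ℝ)+1)) * infDist g Z' < κ' * infDist g Z' :=
    mul_lt_mul_of_pos_right hk2 hd'pos
  linarith
end P5

/-- Global error bound: if the solution set of `A x − B|x| = b` is nonempty and `0` is the
only solution of `A x − B|x| = 0`, then there is `κ > 0` with
`κ · dist(x, X*) ≤ ‖A x − B|x| − b‖₂` for all `x`. -/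
theorem gave_global_error_bound {m n : ℕ} (A B : Matrix (Fin m) (Fin n) ℝ) (b : Fin m → ℝ)
    (hne : ∃ x : Fin n → ℝ, A.mulVec x - B.mulVec (fun j => |x j|) = b)
    (hzero : ∀ x : Fin n → ℝ, A.mulVec x - B.mulVec (fun j => |x j|) = 0 → x = 0) :
    ∃ κ > (0 : ℝ), ∀ x : Fin n → ℝ,
      κ * sInf {r : ℝ | ∃ y : Fin n → ℝ,
          A.mulVec y - B.mulVec (fun j => |y j|) = b ∧ r = vnorm (x - y)} ≤
        vnorm (A.mulVec x - B.mulVec (fun j => |x j|) - b) := by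
  obtain ⟨κ, hκpos, hκ⟩ := gave_euclidean A B b hne hzero
  refine ⟨κ, hκpos, ?_⟩
  intro x
  set Sol : Set (Ee n) := {y : Ee n | phl A B Finset.univ y = b} with hSolD
  have hset : {r : ℝ | ∃ y : Fin n → ℝ,
      A.mulVec y - B.mulVec (fun j => |y j|) = b ∧ r = vnorm (x - y)}
      = Set.range (fun y : Sol => dist (toE x) (y : Ee n)) := by
    ext r
    simp only [Set.mem_setOf_eq, Set.mem_range]
    constructor
    · rintro ⟨y, hy, rfl⟩
      refine ⟨⟨toE y, ?_⟩, ?_⟩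
      · show phl A B Finset.univ y = b
        rw [phl_univ]; exact hy
      · rw [dist_eq_norm, vnorm_eq]
        rfl
    · rintro ⟨⟨y, hy⟩, rfl⟩
      refine ⟨y, ?_, ?_⟩
      · rw [← phl_univ]; exact hy
      · rw [vnorm_eq, dist_eq_norm]
        rfl
  have h2 : sInf {r : ℝ | ∃ y : Fin n → ℝ,
      A.mulVec y - B.mulVec (fun j => |y j|) = b ∧ r = vnorm (x - y)}
      = infDist (toE x) Sol := by
    rw [hset, Metric.infDist_eq_iInf]
    rfl
  rw [h2]
  have h3 : vnorm (A.mulVec x - B.mulVec (fun j => |x j|) - b)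
      = ‖toE (phl A B Finset.univ (toE x)) - toE b‖ := by
    rw [vnorm_eq]
    show ‖toE (A.mulVec x - B.mulVec (fun j => |x j|) - b)‖
      = ‖toE (phl A B Finset.univ (toE x)) - toE b‖
    have : toE (phl A B Finset.univ (toE x)) - toE b
        = toE (A.mulVec x - B.mulVec (fun j => |x j|) - b) := by
      rw [phl_univ]
      rfl
    rw [this]
  rw [h3]
  exact hκ (toE x)
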